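/- Let R be an integral domain. Then R is a D-ring if and only if for every nonconstant polynomial f(x) ∈ R[x] and every nonzero c ∈ R, the set S(f) − S(c) is infinite, where S(f) is the set of nonzero prime ideals 𝔭 of R such that f(k) ∈ 𝔭 for some k ∈ R, and S(c) is the set of nonzero prime ideals of R containing c. -/

import Mathlib

open Polynomial

/-- An integral domain `R` is a *D-ring* if for all polynomials `f, g ∈ R[x]` such that
`g(k) ∣ f(k)` in `R` for all but finitely many `k ∈ R`, there is a polynomial `q` over the
field of fractions of `R` with `f = q * g` in `K[x]`. -/
def IsDRing (R : Type*) [CommRing R] [IsDomain R] : Prop :=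
  ∀ f g : Polynomial R,
    (∀ᶠ k in Filter.cofinite, g.eval k ∣ f.eval k) →
    ∃ q : Polynomial (FractionRing R),
      f.map (algebraMap R (FractionRing R)) = q * g.map (algebraMap R (FractionRing R))

/-- `S f` is the set of nonzero prime ideals `𝔭` of `R` such that `f(k) ∈ 𝔭`
for some `k ∈ R`. -/
def primeSet {R : Type*} [CommRing R] (f : Polynomial R) : Set (Ideal R) :=
  {𝔭 : Ideal R | 𝔭.IsPrime ∧ 𝔭 ≠ ⊥ ∧ ∃ k : R, f.eval k ∈ 𝔭}

section DRingAux

variable {R : Type*} [CommRing R] [IsDomain R]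

/-- The divisibility-infinitude condition. -/
private def DCond (R : Type*) [CommRing R] [IsDomain R] : Prop :=
  ∀ f : Polynomial R, 1 ≤ f.degree → ∀ c : R, c ≠ 0 →
    (primeSet f \ primeSet (Polynomial.C c)).Infinite

private lemma exists_denom (p : Polynomial (FractionRing R)) :
    ∃ d : R, d ≠ 0 ∧ ∃ P : Polynomial R,
      P.map (algebraMap R (FractionRing R)) = C (algebraMap R (FractionRing R) d) * p := by
  obtain ⟨b, hb⟩ := IsLocalization.integerNormalization_map_to_map (nonZeroDivisors R) p
  refine ⟨(b : R), nonZeroDivisors.coe_ne_zero b,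
    IsLocalization.integerNormalization (nonZeroDivisors R) p, ?_⟩
  rw [hb, Algebra.smul_def, Polynomial.algebraMap_apply]

private lemma pow_inj_of_nonunit {p : R} (hp0 : p ≠ 0) (hpu : ¬ IsUnit p) :
    Function.Injective fun n : ℕ => p ^ n := by
  intro i j hij
  simp only at hij
  by_contra hne
  rcases Nat.lt_or_ge i j with h | h
  · have h1 : p ^ i * p ^ (j - i) = p ^ i * 1 := by
      rw [mul_one, ← pow_add, show i + (j - i) = j by omega, ← hij]
    have h2 : p ^ (j - i) = 1 := mul_left_cancel₀ (pow_ne_zero i hp0) h1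
    have : IsUnit p := by
      have hm : p * p ^ (j - i - 1) = 1 := by
        rw [← pow_succ', show j - i - 1 + 1 = j - i by omega]; exact h2
      exact IsUnit.of_mul_eq_one _ hm
    exact hpu this
  · have hlt : j < i := by omega
    have h1 : p ^ j * p ^ (i - j) = p ^ j * 1 := by
      rw [mul_one, ← pow_add, show j + (i - j) = i by omega, hij]
    have h2 : p ^ (i - j) = 1 := mul_left_cancel₀ (pow_ne_zero j hp0) h1
    have : IsUnit p := by
      have hm : p * p ^ (i - j - 1) = 1 := by
        rw [← pow_succ', show i - j - 1 + 1 = i - j by omega]; exact h2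
      exact IsUnit.of_mul_eq_one _ hm
    exact hpu this

private lemma lemD (hcond : DCond R) {s a : R} (hs : s ≠ 0) {B : Set R} (hB : B.Finite)
    (h : ∀ m, m ∉ B → s * m ∣ a) : a = 0 := by
  by_contra ha
  have hall : ∀ 𝔭 : Ideal R, 𝔭.IsPrime → 𝔭 ≠ ⊥ → a ∈ 𝔭 := by
    intro 𝔭 hp hbot
    obtain ⟨p, hpmem, hp0⟩ := (Submodule.ne_bot_iff 𝔭).mp hbot
    have hpnu : ¬ IsUnit p := fun hu => hp.ne_top (Ideal.eq_top_of_isUnit_mem _ hpmem hu)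
    obtain ⟨n, hn⟩ : ∃ n : ℕ, p ^ (n + 1) ∉ B := by
      by_contra hforall
      push_neg at hforall
      have hrange : (Set.range fun n : ℕ => p ^ (n + 1)).Infinite := by
        apply Set.infinite_range_of_injective
        intro i j hij
        exact Nat.succ_injective (pow_inj_of_nonunit hp0 hpnu hij)
      exact hrange (hB.subset (by rintro _ ⟨n, rfl⟩; exact hforall n))
    obtain ⟨t, ht⟩ := h _ hn
    rw [ht]
    exact Ideal.mul_mem_right _ _ (Ideal.mul_mem_left _ _ (𝔭.pow_mem_of_mem hpmem _ (Nat.succ_pos n)))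
  have hinf := hcond X (by rw [degree_X]) a ha
  obtain ⟨𝔭, hmem, hnot⟩ := hinf.nonempty
  obtain ⟨hp, hbot, _⟩ := hmem
  exact hnot ⟨hp, hbot, 0, by simpa using hall 𝔭 hp hbot⟩

private lemma exists_div_rem (r g : Polynomial R) (hg : g ≠ 0) :
    ∃ s : R, s ≠ 0 ∧ ∃ q₁ r₁ : Polynomial R,
      C s * r = q₁ * g + r₁ ∧ r₁.degree < g.degree := by
  set K := FractionRing R
  set φ := algebraMap R K with hφ
  have hinj : Function.Injective φ := IsFractionRing.injective R K
  have hg' : g.map φ ≠ 0 := (Polynomial.map_ne_zero_iff hinj).mpr hg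
  set lc := (g.map φ).leadingCoeff with hlcdef
  have hlc : lc ≠ 0 := leadingCoeff_ne_zero.mpr hg'
  set G : Polynomial K := g.map φ * C lc⁻¹ with hGdef
  have hmonic : G.Monic := monic_mul_leadingCoeff_inv hg'
  set q'' : Polynomial K := C lc⁻¹ * ((r.map φ) /ₘ G) with hq''
  set r' : Polynomial K := (r.map φ) %ₘ G with hr'
  have hdec : r.map φ = q'' * g.map φ + r' := by
    have hqg : q'' * g.map φ = G * (r.map φ /ₘ G) := by rw [hq'', hGdef]; ring
    have h0 := modByMonic_add_div (r.map φ) G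
    rw [← hr'] at h0
    rw [hqg]
    linear_combination -h0
  have hdegG : G.degree = g.degree := by
    rw [hGdef, degree_mul, degree_C (inv_ne_zero hlc), add_zero,
      degree_map_eq_of_injective hinj]
  have hdeg' : r'.degree < g.degree := by
    rw [← hdegG]; exact degree_modByMonic_lt _ hmonic
  obtain ⟨d₁, hd₁, Q, hQ⟩ := exists_denom q''
  obtain ⟨d₂, hd₂, Rr, hRr⟩ := exists_denom r'
  refine ⟨d₁ * d₂, mul_ne_zero hd₁ hd₂, C d₂ * Q, C d₁ * Rr, ?_, ?_⟩
  · apply Polynomial.map_injective φ hinj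
    simp only [Polynomial.map_mul, Polynomial.map_add, map_C, map_mul]
    rw [hQ, hRr, hdec]
    ring
  · have h1 : (C d₁ * Rr).degree = r'.degree := by
      have hφd : ∀ d : R, d ≠ 0 → φ d ≠ 0 := fun d hd h => hd (hinj (by simpa using h))
      rw [← degree_map_eq_of_injective hinj, Polynomial.map_mul, map_C, hRr,
        ← mul_assoc, ← C_mul, degree_mul, degree_C (mul_ne_zero (hφd d₁ hd₁) (hφd d₂ hd₂)),
        zero_add]
    rw [h1]; exact hdeg'


private lemma lemM (hcond : DCond R) : ∀ n : ℕ, ∀ g r : Polynomial R, g.natDegree ≤ n →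
    r.degree < g.degree → (∀ᶠ k in Filter.cofinite, g.eval k ∣ r.eval k) → r = 0 := by
  intro n
  induction n with
  | zero =>
    intro g r hn hdeg _
    by_contra hr0
    have h1 : (0 : WithBot ℕ) ≤ r.degree := zero_le_degree_iff.mpr hr0
    have h2 : g.degree ≤ (g.natDegree : WithBot ℕ) := degree_le_natDegree
    rw [Nat.le_zero.mp hn] at h2
    exact absurd (lt_of_lt_of_le (lt_of_le_of_lt h1 hdeg) h2) (by simp)
  | succ n IH =>
    intro g r hn hdeg hdiv
    by_cases hgn : g.natDegree ≤ n
    · exact IH g r hgn hdeg hdiv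
    have hgdeg : g.natDegree = n + 1 := by omega
    have hg0 : g ≠ 0 := fun h => by simp [h] at hgdeg
    by_cases hr0 : r = 0
    · exact hr0
    -- exception set
    have hE : {k : R | ¬ g.eval k ∣ r.eval k}.Finite := Filter.eventually_cofinite.mp hdiv
    set E := {k : R | ¬ g.eval k ∣ r.eval k} with hEdef
    by_cases hroot : ∃ k₀, g.eval k₀ = 0
    · -- Case A : g has a root in R
      obtain ⟨k₀, hk₀⟩ := hroot
      obtain ⟨g₁, hfac⟩ : (X - C k₀) ∣ g := dvd_iff_isRoot.mpr hk₀
      have hg₁0 : g₁ ≠ 0 := fun h => hg0 (by rw [hfac, h, mul_zero])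
      have hXC : (X - C k₀ : Polynomial R) ≠ 0 := X_sub_C_ne_zero k₀
      have hdegfac : g.natDegree = 1 + g₁.natDegree := by
        rw [hfac, natDegree_mul hXC hg₁0, natDegree_X_sub_C]
      have hg₁n : g₁.natDegree = n := by omega
      have hdegg : g.degree = 1 + g₁.degree := by
        rw [hfac, degree_mul, degree_X_sub_C]
      -- divide r by g₁ with denominator
      obtain ⟨s, hs, q₁, r₁, hkey, hr₁deg⟩ := exists_div_rem r g₁ hg₁0
      -- pointwise divisibility for the pair (g₁, r₁)
      have hdiv₁ : ∀ᶠ k in Filter.cofinite, g₁.eval k ∣ r₁.eval k := by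
        refine hdiv.mono fun k hk => ?_
        have hg₁g : g₁.eval k ∣ g.eval k := by
          rw [hfac, eval_mul]; exact dvd_mul_left _ _
        have h1 : g₁.eval k ∣ (C s * r).eval k := by
          rw [eval_mul, eval_C]
          exact Dvd.dvd.mul_left (dvd_trans hg₁g hk) s
        have h2 : r₁.eval k = (C s * r).eval k - q₁.eval k * g₁.eval k := by
          rw [hkey]; simp [eval_add, eval_mul]
        rw [h2]
        exact dvd_sub h1 (Dvd.dvd.mul_left dvd_rfl _)
      have hr₁ : r₁ = 0 := IH g₁ r₁ (le_of_eq hg₁n) hr₁deg hdiv₁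
      rw [hr₁, add_zero] at hkey
      -- q₁ must be a constant
      have hq₁0 : q₁ ≠ 0 := by
        intro h
        rw [h, zero_mul] at hkey
        exact hr0 ((mul_eq_zero.mp hkey).elim (fun h' => absurd h' (C_ne_zero.mpr hs)) id)
      have hdegq₁ : q₁.degree ≤ 0 := by
        have h1 : q₁.degree + g₁.degree = (C s * r).degree := by rw [hkey, degree_mul]
        have h2 : (C s * r).degree = r.degree := by rw [degree_mul, degree_C hs, zero_add]
        have h3 : q₁.degree + g₁.degree < 1 + g₁.degree := by
          rw [h1, h2, add_comm (1 : WithBot ℕ)]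
          rw [hdegg, add_comm (1 : WithBot ℕ)] at hdeg
          exact hdeg
        have hg₁bot : g₁.degree ≠ ⊥ := degree_eq_bot.not.mpr hg₁0
        have h4 : q₁.degree < 1 := by
          exact (WithBot.add_lt_add_iff_right hg₁bot).mp h3
        exact Nat.WithBot.lt_one_iff_le_zero.mp h4
      set a := q₁.coeff 0 with ha
      have hq₁C : q₁ = C a := eq_C_of_degree_le_zero hdegq₁
      -- use lemD
      have hBfin : ((fun k => k - k₀) '' (E ∪ {k | g₁.eval k = 0})).Finite :=
        (hE.union (finite_setOf_isRoot hg₁0)).image _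
      have ha0 : a = 0 := by
        refine lemD hcond hs hBfin fun m hm => ?_
        set k := m + k₀ with hkdef
        have hkE : k ∉ E ∧ g₁.eval k ≠ 0 := by
          constructor
          · intro hmem
            exact hm ⟨k, Set.mem_union_left _ hmem, by rw [hkdef]; ring⟩
          · intro hmem
            exact hm ⟨k, Set.mem_union_right _ hmem, by rw [hkdef]; ring⟩
        have hdvd : g.eval k ∣ r.eval k := not_not.mp hkE.1
        have heq : s * r.eval k = a * g₁.eval k := by
          have := congrArg (eval k) hkey
          rw [hq₁C] at this
          simpa [eval_mul, eval_C] using this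
        have hgk : g.eval k = (k - k₀) * g₁.eval k := by
          rw [hfac]; simp [eval_mul]
        have h5 : s * ((k - k₀) * g₁.eval k) ∣ s * r.eval k := by
          rw [← hgk]; exact mul_dvd_mul_left s hdvd
        rw [heq] at h5
        have h6 : (s * (k - k₀)) * g₁.eval k ∣ a * g₁.eval k := by
          rw [mul_assoc]; exact h5
        have h7 : s * (k - k₀) ∣ a := (mul_dvd_mul_iff_right hkE.2).mp h6
        have : k - k₀ = m := by rw [hkdef]; ring
        rwa [this] at h7
      rw [hq₁C, ha0, map_zero, zero_mul] at hkey
      exact absurd ((mul_eq_zero.mp hkey).elim (fun h' => absurd h' (C_ne_zero.mpr hs)) id) hr0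
    · -- Case B : g has no root, use gcd over K
      exfalso
      push_neg at hroot
      set K := FractionRing R
      set φ := algebraMap R K with hφdef
      have hinj : Function.Injective φ := IsFractionRing.injective R K
      have hg' : g.map φ ≠ 0 := (Polynomial.map_ne_zero_iff hinj).mpr hg0
      have hr' : r.map φ ≠ 0 := (Polynomial.map_ne_zero_iff hinj).mpr hr0
      classical
      set h := EuclideanDomain.gcd (g.map φ) (r.map φ) with hhdef
      have hh0 : h ≠ 0 := fun h0 => hg' (EuclideanDomain.gcd_eq_zero_iff.mp h0).1
      obtain ⟨γ, hγ⟩ : h ∣ g.map φ := EuclideanDomain.gcd_dvd_left _ _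
      have hγ0 : γ ≠ 0 := fun h0 => hg' (by rw [hγ, h0, mul_zero])
      have hbez := EuclideanDomain.gcd_eq_gcd_ab (g.map φ) (r.map φ)
      set A := EuclideanDomain.gcdA (g.map φ) (r.map φ) with hA
      set B := EuclideanDomain.gcdB (g.map φ) (r.map φ) with hB
      -- γ is nonconstant
      have hdegγ : 1 ≤ γ.natDegree := by
        have h1 : h.natDegree ≤ (r.map φ).natDegree :=
          natDegree_le_of_dvd (EuclideanDomain.gcd_dvd_right _ _) hr'
        have h2 : (r.map φ).natDegree < (g.map φ).natDegree := by
          apply natDegree_lt_natDegree hr'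
          rw [degree_map_eq_of_injective hinj, degree_map_eq_of_injective hinj]
          exact hdeg
        have h3 : (g.map φ).natDegree = h.natDegree + γ.natDegree := by
          rw [hγ, natDegree_mul hh0 hγ0]
        omega
      obtain ⟨d₁, hd₁, Γ, hΓ⟩ := exists_denom (R := R) γ
      obtain ⟨d₂, hd₂, U, hU⟩ := exists_denom (R := R) A
      obtain ⟨d₃, hd₃, V, hV⟩ := exists_denom (R := R) B
      obtain ⟨d₄, hd₄, H, hH⟩ := exists_denom (R := R) h
      have hφd : ∀ d : R, d ≠ 0 → φ d ≠ 0 := fun d hd h0 => hd (hinj (by simpa using h0))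
      -- identity 1 : C (d₄ * d₁) * g = H * Γ
      have hid1 : C (d₄ * d₁) * g = H * Γ := by
        apply Polynomial.map_injective φ hinj
        simp only [Polynomial.map_mul, map_C, map_mul]
        rw [hH, hΓ, hγ]
        ring
      -- identity 2
      have hid2 : C (d₂ * d₃) * H = C (d₃ * d₄) * (g * U) + C (d₂ * d₄) * (r * V) := by
        apply Polynomial.map_injective φ hinj
        simp only [Polynomial.map_mul, Polynomial.map_add, map_C, map_mul]
        rw [hH, hU, hV]
        linear_combination (C (φ d₂) * C (φ d₃) * C (φ d₄)) * hbez
      set ρ := d₁ * d₂ * d₃ * d₄ with hρ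
      have hρ0 : ρ ≠ 0 := by
        simp only [hρ]
        exact mul_ne_zero (mul_ne_zero (mul_ne_zero hd₁ hd₂) hd₃) hd₄
      -- pointwise facts
      have heval1 : ∀ k : R, (d₄ * d₁) * g.eval k = H.eval k * Γ.eval k := fun k => by
        have := congrArg (eval k) hid1
        simpa [eval_mul, eval_C] using this
      have hHk : ∀ k : R, H.eval k ≠ 0 := by
        intro k h0
        have := heval1 k
        rw [h0, zero_mul] at this
        exact (mul_ne_zero (mul_ne_zero hd₄ hd₁) (hroot k)) this
      have hΓk : ∀ k : R, Γ.eval k ≠ 0 := by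
        intro k h0
        have := heval1 k
        rw [h0, mul_zero] at this
        exact (mul_ne_zero (mul_ne_zero hd₄ hd₁) (hroot k)) this
      have hpt : ∀ k : R, g.eval k ∣ r.eval k → Γ.eval k ∣ ρ := by
        intro k hk
        have heval2 : (d₂ * d₃) * H.eval k
            = (d₃ * d₄) * (g.eval k * U.eval k) + (d₂ * d₄) * (r.eval k * V.eval k) := by
          have := congrArg (eval k) hid2
          simpa [eval_mul, eval_add, eval_C] using this
        have hdv : g.eval k ∣ (d₂ * d₃) * H.eval k := by
          rw [heval2]
          exact dvd_add (Dvd.dvd.mul_left (Dvd.dvd.mul_right dvd_rfl _) _)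
            (Dvd.dvd.mul_left (Dvd.dvd.mul_right hk _) _)
        obtain ⟨t, ht⟩ := hdv
        have hcalc : H.eval k * ρ = H.eval k * (Γ.eval k * t) := by
          have e1 := heval1 k
          calc H.eval k * ρ = (d₄ * d₁) * ((d₂ * d₃) * H.eval k) := by rw [hρ]; ring
          _ = (d₄ * d₁) * (g.eval k * t) := by rw [ht]
          _ = ((d₄ * d₁) * g.eval k) * t := by ring
          _ = (H.eval k * Γ.eval k) * t := by rw [e1]
          _ = H.eval k * (Γ.eval k * t) := by ring
        exact ⟨t, mul_left_cancel₀ (hHk k) hcalc⟩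
      -- Γ is nonconstant
      have hdegΓ : 1 ≤ Γ.degree := by
        have h1 : Γ.degree = γ.degree := by
          rw [← degree_map_eq_of_injective hinj Γ, hΓ, degree_mul, degree_C (hφd d₁ hd₁), zero_add]
        rw [h1, degree_eq_natDegree hγ0]
        exact_mod_cast hdegγ
      -- the constant
      set c' := ρ * ∏ k ∈ hE.toFinset, Γ.eval k with hc'
      have hc'0 : c' ≠ 0 :=
        mul_ne_zero hρ0 (Finset.prod_ne_zero_iff.mpr fun k _ => hΓk k)
      obtain ⟨𝔭, hmem, hnot⟩ := (hcond Γ hdegΓ c' hc'0).nonempty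
      obtain ⟨hp, hbot, k, hk⟩ := hmem
      have hdvdc : Γ.eval k ∣ c' := by
        by_cases hkE : k ∈ E
        · exact Dvd.dvd.mul_left (Finset.dvd_prod_of_mem _ (hE.mem_toFinset.mpr hkE)) ρ
        · exact Dvd.dvd.mul_right (hpt k (not_not.mp hkE)) _
      exact hnot ⟨hp, hbot, 0, by simpa using 𝔭.mem_of_dvd hdvdc hk⟩


/-- the `C a`-divisibility of a composition minus its constant term -/
private lemma C_dvd_comp_sub_C (p : Polynomial R) (a : R) :
    C a ∣ p.comp (C a * X) - C (p.coeff 0) := by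
  induction p using Polynomial.induction_on' with
  | add p q hp hq =>
    have hrw : (p + q).comp (C a * X) - C ((p + q).coeff 0)
        = (p.comp (C a * X) - C (p.coeff 0)) + (q.comp (C a * X) - C (q.coeff 0)) := by
      rw [add_comp, coeff_add, C_add]; ring
    rw [hrw]
    exact dvd_add hp hq
  | monomial n c =>
    rw [← C_mul_X_pow_eq_monomial]
    rcases n with _ | m
    · simp
    · have h1 : ((C c * X ^ (m + 1)).comp (C a * X)) = C c * (C a * X) ^ (m + 1) := by
        simp [mul_comp, pow_comp]
      have h2 : (C c * X ^ (m + 1)).coeff 0 = 0 := by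
        rw [C_mul_X_pow_eq_monomial, coeff_monomial]
        simp
      rw [h1, h2, C_0, sub_zero, mul_pow]
      exact Dvd.dvd.mul_left (Dvd.dvd.mul_right (dvd_pow_self _ (Nat.succ_ne_zero m)) _) _

private theorem dring_forward (hD : IsDRing R) : DCond R := by
  intro f hfdeg c hc
  by_contra hnotinf
  rw [Set.not_infinite] at hnotinf
  -- R is infinite
  have hRinf : Infinite R := by
    by_contra hfin
    have : Finite R := not_infinite_iff_finite.mp hfin
    obtain ⟨q, hq⟩ := hD 1 0 (by rw [Filter.cofinite_eq_bot]; exact Filter.eventually_bot)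
    simp only [Polynomial.map_one, Polynomial.map_zero, mul_zero] at hq
    exact one_ne_zero hq
  have hf0 : f ≠ 0 := fun h => by rw [h, degree_zero] at hfdeg; exact absurd hfdeg (by simp)
  -- a point where f does not vanish
  obtain ⟨τ, hτ⟩ : ∃ τ : R, f.eval τ ≠ 0 := by
    obtain ⟨τ, hτ⟩ := ((finite_setOf_isRoot hf0).infinite_compl).nonempty
    exact ⟨τ, hτ⟩
  set a₀ := f.eval τ with ha₀
  -- the element b
  classical
  set T := hnotinf.toFinset with hT
  have hTbot : ∀ 𝔭 ∈ T, 𝔭 ≠ (⊥ : Ideal R) := by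
    intro 𝔭 h𝔭
    rw [hT, Set.Finite.mem_toFinset] at h𝔭
    exact h𝔭.1.2.1
  set A : Ideal R → R := fun 𝔭 =>
    if h : 𝔭 ≠ (⊥ : Ideal R) then ((Submodule.ne_bot_iff 𝔭).mp h).choose else 1 with hA
  have hAspec : ∀ 𝔭 : Ideal R, 𝔭 ≠ ⊥ → A 𝔭 ∈ 𝔭 ∧ A 𝔭 ≠ 0 := by
    intro 𝔭 h
    rw [hA]
    simp only [dif_pos h]
    exact ⟨((Submodule.ne_bot_iff 𝔭).mp h).choose_spec.1,
      ((Submodule.ne_bot_iff 𝔭).mp h).choose_spec.2⟩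
  set b := c * ∏ 𝔭 ∈ T, A 𝔭 with hb
  have hb0 : b ≠ 0 :=
    mul_ne_zero hc (Finset.prod_ne_zero_iff.mpr fun 𝔭 h𝔭 => (hAspec 𝔭 (hTbot 𝔭 h𝔭)).2)
  -- the key property of b
  have hkey : ∀ (k : R) (𝔭 : Ideal R), 𝔭.IsPrime → 𝔭 ≠ ⊥ → f.eval k ∈ 𝔭 → b ∈ 𝔭 := by
    intro k 𝔭 hp hbot hk
    have hmem : 𝔭 ∈ primeSet f := ⟨hp, hbot, k, hk⟩
    by_cases hcp : 𝔭 ∈ primeSet (Polynomial.C c)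
    · obtain ⟨_, _, k', hk'⟩ := hcp
      rw [eval_C] at hk'
      rw [hb]
      exact Ideal.mul_mem_right _ _ hk'
    · have hdiff : 𝔭 ∈ T := by
        rw [hT, Set.Finite.mem_toFinset]
        exact ⟨hmem, hcp⟩
      have h1 : A 𝔭 ∈ 𝔭 := (hAspec 𝔭 hbot).1
      have h2 : A 𝔭 ∣ ∏ 𝔮 ∈ T, A 𝔮 := Finset.dvd_prod_of_mem _ hdiff
      rw [hb]
      exact Ideal.mul_mem_left _ _ (𝔭.mem_of_dvd h2 h1)
  clear_value b
  -- the polynomial u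
  set F := f.comp (X + C τ) with hF
  have hFcoeff : F.coeff 0 = a₀ := by
    rw [coeff_zero_eq_eval_zero, hF, eval_comp]
    simp
    exact ha₀.symm
  obtain ⟨w, hw⟩ := C_dvd_comp_sub_C F (a₀ * b)
  rw [hFcoeff] at hw
  set u : Polynomial R := 1 + C b * w with hu
  have ha₀b : a₀ * b ≠ 0 := mul_ne_zero hτ hb0
  have hclaim : C a₀ * u = F.comp (C (a₀ * b) * X) := by
    rw [hu]
    have : F.comp (C (a₀ * b) * X) - C a₀ = C (a₀ * b) * w := hw
    calc C a₀ * (1 + C b * w) = C a₀ + (C a₀ * C b) * w := by ring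
    _ = C a₀ + C (a₀ * b) * w := by rw [C_mul]
    _ = C a₀ + (F.comp (C (a₀ * b) * X) - C a₀) := by rw [this]
    _ = F.comp (C (a₀ * b) * X) := by ring
  -- eval of u
  have heval : ∀ t : R, a₀ * u.eval t = f.eval (a₀ * b * t + τ) := by
    intro t
    have h1 := congrArg (eval t) hclaim
    simp only [eval_mul, eval_C] at h1
    rw [h1, eval_comp, eval_comp]
    simp [eval_mul, eval_C]
  -- natDegree of u
  have hfnat : 1 ≤ f.natDegree := by
    have : 0 < f.degree := lt_of_lt_of_le (by norm_num) hfdeg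
    exact natDegree_pos_iff_degree_pos.mpr this
  have hFnat : F.natDegree = f.natDegree := by
    rw [hF, natDegree_comp, natDegree_X_add_C, mul_one]
  have hunat : u.natDegree = f.natDegree := by
    have h1 : (C a₀ * u).natDegree = u.natDegree := natDegree_C_mul hτ
    have h2 : (F.comp (C (a₀ * b) * X)).natDegree = F.natDegree := by
      rw [natDegree_comp, natDegree_C_mul_X _ ha₀b, mul_one]
    rw [← h1, hclaim, h2, hFnat]
  have hu0 : u ≠ 0 := by
    intro h
    rw [h, natDegree_zero] at hunat
    omega
  -- u takes unit values a.e.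
  have hfinroots : {t : R | f.eval (a₀ * b * t + τ) = 0}.Finite := by
    have hinj : Function.Injective (fun t : R => a₀ * b * t + τ) := by
      intro x y hxy
      simp only at hxy
      exact mul_left_cancel₀ ha₀b (add_right_cancel hxy)
    exact Set.Finite.preimage hinj.injOn (finite_setOf_isRoot hf0)
  have hdiv : ∀ᶠ t in Filter.cofinite, u.eval t ∣ (1 : Polynomial R).eval t := by
    rw [Filter.eventually_cofinite]
    apply hfinroots.subset
    intro t ht
    simp only [Set.mem_setOf_eq, eval_one] at ht ⊢
    by_contra hval
    apply ht
    have hut0 : u.eval t ≠ 0 := by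
      intro h0
      have := heval t
      rw [h0, mul_zero] at this
      exact hval this.symm
    have hunit : IsUnit (u.eval t) := by
      by_contra hnotunit
      obtain ⟨𝔪, hmax, hle⟩ :=
        Ideal.exists_le_maximal _ ((Ideal.span_singleton_eq_top).not.mpr hnotunit)
      have hmem : u.eval t ∈ 𝔪 := hle (Ideal.mem_span_singleton_self _)
      have hprime : 𝔪.IsPrime := hmax.isPrime
      have hmbot : 𝔪 ≠ ⊥ := by
        intro h0
        rw [h0] at hmem
        exact hut0 ((Submodule.mem_bot R).mp hmem)
      have hfv : f.eval (a₀ * b * t + τ) ∈ 𝔪 := by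
        rw [← heval t]
        exact Ideal.mul_mem_left _ _ hmem
      have hbm : b ∈ 𝔪 := hkey _ _ hprime hmbot hfv
      have h1m : (1 : R) ∈ 𝔪 := by
        have hone : u.eval t - b * w.eval t = 1 := by
          rw [hu]
          simp [eval_add, eval_mul, eval_C]
        rw [← hone]
        exact Submodule.sub_mem _ hmem (Ideal.mul_mem_right _ _ hbm)
      exact hmax.ne_top ((Ideal.eq_top_iff_one _).mpr h1m)
    exact hunit.dvd
  -- apply the D-ring property to the pair (1, u)
  obtain ⟨q, hq⟩ := hD 1 u hdiv
  rw [Polynomial.map_one] at hq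
  have hinj : Function.Injective (algebraMap R (FractionRing R)) :=
    IsFractionRing.injective R (FractionRing R)
  have hmu0 : u.map (algebraMap R (FractionRing R)) ≠ 0 :=
    (Polynomial.map_ne_zero_iff hinj).mpr hu0
  have hq0 : q ≠ 0 := by
    intro h0
    rw [h0, zero_mul] at hq
    exact one_ne_zero hq
  have hdeg := congrArg natDegree hq
  rw [natDegree_one, natDegree_mul hq0 hmu0, natDegree_map_eq_of_injective hinj, hunat] at hdeg
  omega


private theorem dring_backward (hcond : DCond R) : IsDRing R := by
  intro f g hdiv
  set K := FractionRing R
  set φ := algebraMap R K with hφ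
  have hinj : Function.Injective φ := IsFractionRing.injective R K
  -- R is infinite
  have hRinf : Infinite R := by
    have h := hcond X (by rw [degree_X]) 1 one_ne_zero
    by_contra hinf
    have hfin : Finite R := not_infinite_iff_finite.mp hinf
    have : Finite (Ideal R) :=
      Finite.of_injective (fun I : Ideal R => (I : Set R)) SetLike.coe_injective
    exact (Set.toFinite _).not_infinite h
  by_cases hg : g = 0
  · subst hg
    have hev : ∀ᶠ k in Filter.cofinite, f.eval k = 0 := by
      simpa [zero_dvd_iff] using hdiv
    have hf0 : f = 0 := by
      apply eq_zero_of_infinite_isRoot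
      have hfin : {k : R | ¬ f.eval k = 0}.Finite := Filter.eventually_cofinite.mp hev
      have : {k : R | ¬ f.eval k = 0}ᶜ.Infinite := hfin.infinite_compl
      apply this.mono
      intro x hx
      simpa using hx
    exact ⟨0, by rw [hf0]; simp⟩
  · obtain ⟨s, hs, q₁, r₁, hkey, hdegr₁⟩ := exists_div_rem f g hg
    have hdiv₁ : ∀ᶠ k in Filter.cofinite, g.eval k ∣ r₁.eval k := by
      refine hdiv.mono fun k hk => ?_
      have h2 : r₁.eval k = (C s * f).eval k - q₁.eval k * g.eval k := by
        rw [hkey]; simp [eval_add, eval_mul]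
      rw [h2, eval_mul, eval_C]
      exact dvd_sub (Dvd.dvd.mul_left hk s) (Dvd.dvd.mul_left dvd_rfl _)
    have hr₁ : r₁ = 0 := lemM hcond g.natDegree g r₁ le_rfl hdegr₁ hdiv₁
    rw [hr₁, add_zero] at hkey
    have hmap := congrArg (Polynomial.map φ) hkey
    simp only [Polynomial.map_mul, map_C] at hmap
    have hφs : φ s ≠ 0 := fun h0 => hs (hinj (by simpa using h0))
    refine ⟨C (φ s)⁻¹ * q₁.map φ, ?_⟩
    calc f.map φ = C ((φ s)⁻¹) * (C (φ s) * f.map φ) := by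
          rw [← mul_assoc, ← C_mul, inv_mul_cancel₀ hφs, C_1, one_mul]
    _ = C ((φ s)⁻¹) * (q₁.map φ * g.map φ) := by rw [hmap]
    _ = (C ((φ s)⁻¹) * q₁.map φ) * g.map φ := by ring


end DRingAux

theorem isDRing_iff_primeSet_diff_infinite (R : Type*) [CommRing R] [IsDomain R] :
    IsDRing R ↔
      ∀ f : Polynomial R, 1 ≤ f.degree → ∀ c : R, c ≠ 0 →
        (primeSet f \ primeSet (Polynomial.C c)).Infinite :=
  ⟨fun hD => dring_forward hD, fun h => dring_backward h⟩
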